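/- Let m ≥ 2, let q ≥ 2 be an integer, and let A be an m×m primitive binary matrix. Then the limit dim_M X_A^{(q)} = lim_{n→∞} (1/n) log_m #P(X_A^{(q)}, {1,…,n}) exists and equals (q − 1)² · Σ_{i=1}^{∞} log_m |A^{i−1}| / q^{i+1}. -/

import Mathlib

open Filter Topology

/-- Sequences over the alphabet `{0,…,m−1}`; coordinate `n` represents position `n+1`. -/
def ASeq (m : ℕ) : Type := ℕ → Fin m

open Classical in
/-- The distance `d(x,y) = m^{-min{i ≥ 1 : x_i ≠ y_i}}` on `Σ_m^ℕ`
(in the 0-based representation, `min{i ≥ 1 : x_i ≠ y_i} = firstDiff x y + 1`). -/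
noncomputable def aseqDist (m : ℕ) (x y : ASeq m) : ℝ :=
  if x = y then 0 else ((m : ℝ)⁻¹) ^ (PiNat.firstDiff x y + 1)

lemma aseqDist_self (m : ℕ) (x : ASeq m) : aseqDist m x x = 0 := by
  simp [aseqDist]

lemma aseqDist_comm (m : ℕ) (x y : ASeq m) : aseqDist m x y = aseqDist m y x := by
  unfold aseqDist
  by_cases h : x = y
  · simp [h]
  · rw [if_neg h, if_neg (Ne.symm h)]
    exact congrArg (fun k => ((m : ℝ)⁻¹) ^ (k + 1)) (PiNat.firstDiff_comm x y)

lemma aseqDist_triangle (m : ℕ) (x y z : ASeq m) :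
    aseqDist m x z ≤ aseqDist m x y + aseqDist m y z := by
  classical
  unfold aseqDist
  rcases Nat.eq_zero_or_pos m with hm | hm
  · subst hm; exact (x 0).elim0
  have hr0 : (0:ℝ) ≤ (m : ℝ)⁻¹ := by positivity
  have hr1 : (m : ℝ)⁻¹ ≤ 1 := by
    rw [inv_le_one_iff₀]; right; exact_mod_cast hm
  by_cases hxz : x = z
  · rw [if_pos hxz]
    have h1 : (0:ℝ) ≤ if x = y then 0 else ((m : ℝ)⁻¹) ^ (PiNat.firstDiff x y + 1) := by
      split <;> positivity
    have h2 : (0:ℝ) ≤ if y = z then 0 else ((m : ℝ)⁻¹) ^ (PiNat.firstDiff y z + 1) := by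
      split <;> positivity
    linarith
  · rw [if_neg hxz]
    by_cases hxy : x = y
    · subst hxy; rw [if_pos rfl, if_neg hxz]; simp
    by_cases hyz : y = z
    · subst hyz; rw [if_pos rfl, if_neg hxz]; simp
    rw [if_neg hxy, if_neg hyz]
    have hmin := PiNat.min_firstDiff_le x y z hxz
    have hpos1 : (0:ℝ) ≤ ((m : ℝ)⁻¹) ^ (PiNat.firstDiff x y + 1) := by positivity
    have hpos2 : (0:ℝ) ≤ ((m : ℝ)⁻¹) ^ (PiNat.firstDiff y z + 1) := by positivity
    rcases le_total (PiNat.firstDiff x y) (PiNat.firstDiff y z) with hcmp | hcmp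
    · have : ((m : ℝ)⁻¹) ^ (PiNat.firstDiff x z + 1) ≤
          ((m : ℝ)⁻¹) ^ (PiNat.firstDiff x y + 1) := by
        apply pow_le_pow_of_le_one hr0 hr1
        simp only [min_eq_left hcmp] at hmin; omega
      linarith
    · have : ((m : ℝ)⁻¹) ^ (PiNat.firstDiff x z + 1) ≤
          ((m : ℝ)⁻¹) ^ (PiNat.firstDiff y z + 1) := by
        apply pow_le_pow_of_le_one hr0 hr1
        simp only [min_eq_right hcmp] at hmin; omega
      linarith

lemma aseqDist_eq_zero (m : ℕ) (x y : ASeq m) (h : aseqDist m x y = 0) : x = y := by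
  by_contra hxy
  unfold aseqDist at h
  rw [if_neg hxy] at h
  rcases Nat.eq_zero_or_pos m with hm | hm
  · subst hm; exact (x 0).elim0
  have : (0:ℝ) < ((m : ℝ)⁻¹) ^ (PiNat.firstDiff x y + 1) := by positivity
  linarith

noncomputable instance ASeq.metricSpace (m : ℕ) : MetricSpace (ASeq m) where
  dist := aseqDist m
  dist_self := aseqDist_self m
  dist_comm := aseqDist_comm m
  dist_triangle := aseqDist_triangle m
  eq_of_dist_eq_zero := aseqDist_eq_zero m _ _

/-- The affine multiplicative subshift `X_A^{(p,q;a,b)}`: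
`A(x_{pk+a}, x_{qk+b}) = 1` for all `k ≥ 1` with `pk+a ≥ 1`, `qk+b ≥ 1`
(position `n ≥ 1` is coordinate `n−1`). -/
def affineSubshift (m : ℕ) (A : Matrix (Fin m) (Fin m) ℕ) (p q : ℕ) (a b : ℤ) :
    Set (ASeq m) :=
  {x | ∀ k : ℕ, 1 ≤ k → 1 ≤ (p : ℤ) * k + a → 1 ≤ (q : ℤ) * k + b →
      A (x (((p : ℤ) * k + a).toNat - 1)) (x (((q : ℤ) * k + b).toNat - 1)) = 1}

/-- The number of patterns of `X` on positions `{1,…,n}`. -/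
noncomputable def patternCount (m : ℕ) (X : Set (ASeq m)) (n : ℕ) : ℕ :=
  Set.ncard ((fun (x : ASeq m) (i : Fin n) => x i) '' X)

/-- `|B|`: the sum of all entries of a matrix. -/
def entrySum {m : ℕ} (B : Matrix (Fin m) (Fin m) ℕ) : ℕ := ∑ i, ∑ j, B i j

/-- The row sums `a_i` of a matrix. -/
def rowSum {m : ℕ} (A : Matrix (Fin m) (Fin m) ℕ) (i : Fin m) : ℕ := ∑ j, A i j

/-- The multiplicative shift of finite type `X_A^{(q)}`:
`A(x_i, x_{qi}) = 1` for all `i ≥ 1` (position `n ≥ 1` is coordinate `n−1`). -/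
def multSubshift (m : ℕ) (A : Matrix (Fin m) (Fin m) ℕ) (q : ℕ) : Set (ASeq m) :=
  {x | ∀ i : ℕ, 1 ≤ i → A (x (i - 1)) (x (q * i - 1)) = 1}



lemma sigma_subtype_ext {ι W : Type*} {P : ι → W → Prop}
    {x y : Σ l : ι, {w : W // P l w}} (h1 : x.1 = y.1) (h2 : (x.2 : W) = (y.2 : W)) :
    x = y := by
  obtain ⟨l, w⟩ := x
  obtain ⟨l', w'⟩ := y
  dsimp at h1 h2
  subst h1
  rw [Subtype.ext h2]

section WordCount

variable {m : ℕ} (A : Matrix (Fin m) (Fin m) ℕ)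

/-- admissibility of a finite word -/
def Adm {L : ℕ} (w : Fin L → Fin m) : Prop :=
  ∀ t : ℕ, ∀ h : t + 1 < L, A (w ⟨t, Nat.lt_of_succ_lt h⟩) (w ⟨t + 1, h⟩) = 1

lemma nat_card_sigma {ι : Type*} [Fintype ι] (f : ι → Type*) [∀ i, Finite (f i)] :
    Nat.card (Σ i, f i) = ∑ i, Nat.card (f i) := by
  classical
  have : ∀ i, Fintype (f i) := fun i => Fintype.ofFinite _
  simp [Nat.card_eq_fintype_card, Fintype.card_sigma]

lemma adm_tail {L : ℕ} (w : Fin (L + 2) → Fin m) (h : Adm A w) : Adm A (Fin.tail w) := by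
  intro t ht
  have := h (t + 1) (by omega)
  simpa [Fin.tail, Fin.succ_mk] using this

lemma cons_mk_succ {L : ℕ} (w : Fin (L + 1) → Fin m) (i : Fin m) (t : ℕ)
    (h : t + 1 < L + 2) :
    (Fin.cons i w : Fin (L + 2) → Fin m) ⟨t + 1, h⟩ = w ⟨t, by omega⟩ := by
  rw [show (⟨t + 1, h⟩ : Fin (L + 2)) = Fin.succ ⟨t, by omega⟩ from rfl, Fin.cons_succ]

lemma mk_one_eq {L : ℕ} (h : 1 < L + 2) : (⟨1, h⟩ : Fin (L + 2)) = 1 :=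
  Fin.ext (by simp)

lemma mk_zero_eq {L : ℕ} (h : 0 < L + 2) : (⟨0, h⟩ : Fin (L + 2)) = 0 :=
  Fin.ext (by simp)

lemma adm_cons {L : ℕ} (w : Fin (L + 1) → Fin m) (i l : Fin m)
    (hadm : Adm A w) (h0 : w 0 = l) (hAl : A i l = 1) :
    Adm A (Fin.cons i w : Fin (L + 2) → Fin m) := by
  intro t ht
  match t with
  | 0 =>
    rw [mk_zero_eq, Fin.cons_zero, cons_mk_succ, show (⟨0, by omega⟩ : Fin (L+1)) = 0 from
      Fin.ext (by simp), h0, hAl]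
  | Nat.succ t =>
    simp only [cons_mk_succ]
    exact hadm t (by omega)

/-- peeling off the head of an admissible word -/
noncomputable def headEquiv (L : ℕ) (i : Fin m) :
    {w : Fin (L + 2) → Fin m // Adm A w ∧ w 0 = i} ≃
      Σ l : Fin m, {w : Fin (L + 1) → Fin m // (Adm A w ∧ w 0 = l) ∧ A i l = 1} where
  toFun w := ⟨w.1 1, ⟨Fin.tail w.1, ⟨⟨adm_tail A w.1 w.2.1, rfl⟩, by
    have := w.2.1 0 (by omega)
    rwa [mk_zero_eq, mk_one_eq, w.2.2] at this⟩⟩⟩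
  invFun p := ⟨Fin.cons i p.2.1,
    adm_cons A p.2.1 i p.1 p.2.2.1.1 p.2.2.1.2 p.2.2.2, by simp⟩
  left_inv := by
    rintro ⟨w, hadm, h0⟩
    apply Subtype.ext
    dsimp only
    rw [← h0, Fin.cons_self_tail]
  right_inv := by
    rintro ⟨l, w, ⟨hadm, h0⟩, hAl⟩
    apply sigma_subtype_ext
    · dsimp only
      rw [← mk_one_eq (by omega), cons_mk_succ, show (⟨0, by omega⟩ : Fin (L+1)) = 0 from
        Fin.ext (by simp), h0]
    · dsimp only
      simp

lemma card_adm_head (hbin : ∀ i j, A i j ≤ 1) (L : ℕ) (i : Fin m) :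
    Nat.card {w : Fin (L + 1) → Fin m // Adm A w ∧ w 0 = i} = rowSum (A ^ L) i := by
  induction L generalizing i with
  | zero =>
    have h1 : Nat.card {w : Fin 1 → Fin m // Adm A w ∧ w 0 = i} = 1 := by
      haveI : Nonempty {w : Fin 1 → Fin m // Adm A w ∧ w 0 = i} :=
        ⟨⟨fun _ => i, fun t ht => by omega, rfl⟩⟩
      haveI : Subsingleton {w : Fin 1 → Fin m // Adm A w ∧ w 0 = i} := by
        constructor
        rintro ⟨w, -, hw⟩ ⟨w', -, hw'⟩
        apply Subtype.ext
        funext x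
        have hx : x = 0 := Subsingleton.elim _ _
        show w x = w' x
        rw [hx, hw, hw']
      exact Nat.card_unique
    rw [h1]
    simp [rowSum, pow_zero, Matrix.one_apply]
  | succ L ih =>
    rw [Nat.card_congr (headEquiv A L i), nat_card_sigma]
    have step : ∀ l : Fin m,
        Nat.card {w : Fin (L + 1) → Fin m // (Adm A w ∧ w 0 = l) ∧ A i l = 1}
          = A i l * rowSum (A ^ L) l := by
      intro l
      rcases Nat.le_one_iff_eq_zero_or_eq_one.mp (hbin i l) with h | h
      · have : IsEmpty {w : Fin (L + 1) → Fin m // (Adm A w ∧ w 0 = l) ∧ A i l = 1} := by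
          constructor; rintro ⟨w, -, hAl⟩; omega
        rw [Nat.card_of_isEmpty, h, zero_mul]
      · rw [h, one_mul, ← ih l]
        apply Nat.card_congr
        exact Equiv.subtypeEquivRight (fun w => by tauto)
    rw [Finset.sum_congr rfl (fun l _ => step l)]
    rw [show A ^ (L + 1) = A * A ^ L from pow_succ' A L]
    unfold rowSum
    simp only [Matrix.mul_apply]
    rw [Finset.sum_comm]
    exact Finset.sum_congr rfl fun l _ => Finset.mul_sum _ _ _

lemma card_adm (hbin : ∀ i j, A i j ≤ 1) (L : ℕ) :
    Nat.card {w : Fin (L + 1) → Fin m // Adm A w} = entrySum (A ^ L) := by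
  have E : {w : Fin (L + 1) → Fin m // Adm A w} ≃
      Σ i : Fin m, {w : Fin (L + 1) → Fin m // Adm A w ∧ w 0 = i} := by
    refine ⟨fun w => ⟨w.1 0, ⟨w.1, w.2, rfl⟩⟩, fun p => ⟨p.2.1, p.2.2.1⟩, fun w => rfl, ?_⟩
    rintro ⟨i, w, hadm, h0⟩
    exact sigma_subtype_ext h0 rfl
  rw [Nat.card_congr E, nat_card_sigma, entrySum]
  exact Finset.sum_congr rfl fun i _ => card_adm_head A hbin L i

end WordCount


section Chains

/-- the `q`-free part -/
def startOf (q p : ℕ) : ℕ := p / q ^ (Nat.maxPowDiv q p)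

/-- the `q`-adic valuation -/
def expOf (q p : ℕ) : ℕ := Nat.maxPowDiv q p

variable {q : ℕ} (hq : 2 ≤ q)

lemma startOf_mul_pow {p : ℕ} : startOf q p * q ^ expOf q p = p :=
  Nat.div_mul_cancel (Nat.maxPowDiv.pow_dvd (p := q) (n := p))

lemma startOf_pos {p : ℕ} (hp : 1 ≤ p) : 1 ≤ startOf q p := by
  rcases Nat.eq_zero_or_pos (startOf q p) with h | h
  · have := @startOf_mul_pow q p
    rw [h] at this; simp at this; omega
  · exact h

lemma startOf_le {p : ℕ} : startOf q p ≤ p := Nat.div_le_self _ _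

include hq in
lemma startOf_not_dvd {p : ℕ} (hp : 1 ≤ p) : ¬ q ∣ startOf q p := by
  intro ⟨c, hc⟩
  have h1 : q ^ (Nat.maxPowDiv q p + 1) ∣ p := by
    refine ⟨c, ?_⟩
    calc p = startOf q p * q ^ expOf q p := startOf_mul_pow.symm
    _ = q * c * q ^ (Nat.maxPowDiv q p) := by rw [← hc]; rfl
    _ = q ^ (Nat.maxPowDiv q p + 1) * c := by ring
  have : Nat.maxPowDiv q p + 1 ≤ Nat.maxPowDiv q p :=
    (Nat.pow_dvd_iff_le_padicValNat (by omega) (by omega)).mp h1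
  omega

lemma maxPowDiv_not_dvd {j : ℕ} (hj : ¬ q ∣ j) : Nat.maxPowDiv q j = 0 := by
  by_contra h
  have hd := Nat.maxPowDiv.pow_dvd (p := q) (n := j)
  exact hj (dvd_trans (dvd_pow_self q h) hd)

include hq in
lemma maxPowDiv_mul_pow {j t : ℕ} (hj : ¬ q ∣ j) : Nat.maxPowDiv q (j * q ^ t) = t := by
  have hj0 : 0 < j := by
    rcases Nat.eq_zero_or_pos j with h | h
    · exact absurd (h ▸ dvd_zero q) hj
    · exact h
  rw [mul_comm, show Nat.maxPowDiv q (q ^ t * j) = padicValNat q (q ^ t * j) from rfl,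
    Nat.maxPowDiv.base_pow_mul (by omega) hj0.ne', show padicValNat q j = Nat.maxPowDiv q j from rfl,
    maxPowDiv_not_dvd hj]
  omega

include hq in
lemma startOf_mul_pow_eq {j t : ℕ} (hj : ¬ q ∣ j) : startOf q (j * q ^ t) = j := by
  unfold startOf
  rw [maxPowDiv_mul_pow hq hj]
  exact Nat.mul_div_cancel _ (pow_pos (by omega) t)

/-- starts of chains -/
def chainStarts (q n : ℕ) : Finset ℕ := (Finset.Icc 1 n).filter (fun j => ¬ q ∣ j)

/-- length of the chain of `j` within `{1,…,n}` -/
def chainLen (q n j : ℕ) : ℕ := Nat.log q (n / j) + 1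

include hq in
lemma chainLen_iff {n j : ℕ} (hj : 1 ≤ j) (hjn : j ≤ n) (t : ℕ) :
    j * q ^ t ≤ n ↔ t < chainLen q n j := by
  have h1 : j * q ^ t ≤ n ↔ q ^ t ≤ n / j := by
    rw [Nat.le_div_iff_mul_le (by omega : 0 < j), mul_comm]
  have h2 : q ^ t ≤ n / j ↔ t ≤ Nat.log q (n / j) :=
    (Nat.le_log_iff_pow_le (by omega) (by
      have : 1 ≤ n / j := (Nat.one_le_div_iff (by omega)).mpr hjn
      omega)).symm
  rw [h1, h2, chainLen]; omega

include hq in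
lemma startOf_mem {n p : ℕ} (hp : 1 ≤ p) (hpn : p ≤ n) : startOf q p ∈ chainStarts q n := by
  rw [chainStarts, Finset.mem_filter, Finset.mem_Icc]
  exact ⟨⟨startOf_pos hp, le_trans startOf_le hpn⟩, startOf_not_dvd hq hp⟩

include hq in
lemma expOf_lt {n p : ℕ} (hp : 1 ≤ p) (hpn : p ≤ n) :
    expOf q p < chainLen q n (startOf q p) := by
  rw [← chainLen_iff hq (startOf_pos hp) (le_trans startOf_le hpn)]
  rw [startOf_mul_pow]; exact hpn

end Chains

section LA

variable {m : ℕ} (A : Matrix (Fin m) (Fin m) ℕ) (q : ℕ)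

/-- local admissibility of a pattern on `{1,…,n}` -/
def LAProp (n : ℕ) (u : Fin n → Fin m) : Prop :=
  ∀ p : ℕ, ∀ h1 : 1 ≤ p, ∀ hp : p ≤ n, ∀ h2 : q * p ≤ n,
    A (u ⟨p - 1, by omega⟩) (u ⟨q * p - 1, by omega⟩) = 1

/-- evaluation congruence for tuples of words -/
lemma W_eval_congr {n : ℕ}
    (W : ∀ j : (chainStarts q n : Finset ℕ), {w : Fin (chainLen q n j) → Fin m // Adm A w})
    {j j' : (chainStarts q n : Finset ℕ)} (h : (j : ℕ) = (j' : ℕ))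
    {t : Fin (chainLen q n j)} {t' : Fin (chainLen q n j')} (ht : (t : ℕ) = (t' : ℕ)) :
    (W j).1 t = (W j').1 t' := by
  have hjj : j = j' := Subtype.ext h
  subst hjj
  rw [Fin.ext ht]

variable {q} (hq : 2 ≤ q)

include hq in
set_option maxHeartbeats 2000000 in
lemma LA_bijection (n : ℕ) :
    Function.Bijective
      (fun (u : {u : Fin n → Fin m // LAProp A q n u})
        (j : (chainStarts q n : Finset ℕ)) =>
        (⟨fun t => u.1 ⟨(j : ℕ) * q ^ (t : ℕ) - 1, by
            have hj := j.2
            simp only [chainStarts, Finset.mem_filter, Finset.mem_Icc] at hj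
            have hle : (j : ℕ) * q ^ (t : ℕ) ≤ n :=
              (chainLen_iff hq hj.1.1 hj.1.2 _).mpr t.2
            have : 1 ≤ (j : ℕ) * q ^ (t : ℕ) :=
              Nat.mul_pos hj.1.1 (pow_pos (by omega) _)
            omega⟩, by
          intro t ht
          have hj := j.2
          simp only [chainStarts, Finset.mem_filter, Finset.mem_Icc] at hj
          have hle1 : (j : ℕ) * q ^ t ≤ n := (chainLen_iff hq hj.1.1 hj.1.2 _).mpr (by omega)
          have hle2 : (j : ℕ) * q ^ (t + 1) ≤ n :=
            (chainLen_iff hq hj.1.1 hj.1.2 _).mpr ht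
          have hp1 : 1 ≤ (j : ℕ) * q ^ t := Nat.mul_pos hj.1.1 (pow_pos (by omega) _)
          have := u.2 ((j : ℕ) * q ^ t) hp1 (by omega) (by
            calc q * ((j : ℕ) * q ^ t) = (j : ℕ) * q ^ (t + 1) := by ring
            _ ≤ n := hle2)
          convert this using 2
          show u.1 ⟨(j : ℕ) * q ^ (t + 1) - 1, by
              have := Nat.mul_pos hj.1.1 (pow_pos (show 0 < q by omega) (t+1)); omega⟩ = _
          exact congrArg u.1 (Fin.ext
            (by show (j : ℕ) * q ^ (t+1) - 1 = q * ((j : ℕ) * q ^ t) - 1; ring_nf))⟩ :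
          {w : Fin (chainLen q n j) → Fin m // Adm A w})) := by
  constructor
  · rintro ⟨u, hu⟩ ⟨u', hu'⟩ h
    apply Subtype.ext
    funext i
    have hp1 : 1 ≤ (i : ℕ) + 1 := by omega
    have hpn : (i : ℕ) + 1 ≤ n := i.2
    have hmem := startOf_mem hq (q := q) hp1 hpn
    have hlt := expOf_lt hq (q := q) hp1 hpn
    have := congrFun h ⟨startOf q ((i : ℕ) + 1), hmem⟩
    have h2 := congrFun (congrArg Subtype.val this) ⟨expOf q ((i : ℕ) + 1), hlt⟩
    simp only at h2
    have hidx : startOf q ((i : ℕ) + 1) * q ^ expOf q ((i : ℕ) + 1) - 1 = (i : ℕ) := by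
      rw [startOf_mul_pow]
      omega
    rw [show (⟨startOf q ((i:ℕ)+1) * q ^ (expOf q ((i:ℕ)+1)) - 1, _⟩ : Fin n) = i from
      Fin.ext hidx] at h2
    exact h2
  · intro W
    set u : Fin n → Fin m := fun i =>
      (W ⟨startOf q ((i : ℕ) + 1), startOf_mem hq (by omega) i.2⟩).1
        ⟨expOf q ((i : ℕ) + 1), expOf_lt hq (by omega) i.2⟩ with hu
    have hLA : LAProp A q n u := by
      intro p h1 hp h2
      have hqp1 : 1 ≤ q * p := by nlinarith
      have heq1 : p - 1 + 1 = p := by omega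
      have heq2 : q * p - 1 + 1 = q * p := by omega
      have hs : startOf q (q * p) = startOf q p := by
        conv_lhs => rw [← startOf_mul_pow (q := q) (p := p)]
        rw [show q * (startOf q p * q ^ expOf q p) = startOf q p * q ^ (expOf q p + 1) by ring]
        exact startOf_mul_pow_eq hq (startOf_not_dvd hq h1)
      have he : expOf q (q * p) = expOf q p + 1 := by
        conv_lhs => rw [← startOf_mul_pow (q := q) (p := p),
          show q * (startOf q p * q ^ expOf q p) = startOf q p * q ^ (expOf q p + 1) by ring]
        exact maxPowDiv_mul_pow hq (startOf_not_dvd hq h1)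
      have e1 : u ⟨p - 1, by omega⟩ =
          (W ⟨startOf q p, startOf_mem hq h1 hp⟩).1 ⟨expOf q p, expOf_lt hq h1 hp⟩ := by
        rw [hu]
        exact W_eval_congr A q W
          (by show startOf q (p - 1 + 1) = startOf q p; rw [heq1])
          (by show expOf q (p - 1 + 1) = expOf q p; rw [heq1])
      have e2 : u ⟨q * p - 1, by omega⟩ =
          (W ⟨startOf q p, startOf_mem hq h1 hp⟩).1 ⟨expOf q p + 1, by
            rw [← chainLen_iff hq (startOf_pos h1) (le_trans startOf_le hp)]
            calc startOf q p * q ^ (expOf q p + 1)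
                = q * (startOf q p * q ^ expOf q p) := by ring
            _ = q * p := by rw [startOf_mul_pow]
            _ ≤ n := h2⟩ := by
        rw [hu]
        exact W_eval_congr A q W
          (by show startOf q (q * p - 1 + 1) = startOf q p; rw [heq2, hs])
          (by show expOf q (q * p - 1 + 1) = expOf q p + 1; rw [heq2, he])
      rw [e1, e2]
      exact (W _).2 (expOf q p) _
    refine ⟨⟨u, hLA⟩, ?_⟩
    funext j
    apply Subtype.ext
    funext t
    simp only
    have hj := j.2
    simp only [chainStarts, Finset.mem_filter, Finset.mem_Icc] at hj
    have hp1 : 1 ≤ (j : ℕ) * q ^ (t : ℕ) := Nat.mul_pos hj.1.1 (pow_pos (by omega) _)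
    have heq : (j : ℕ) * q ^ (t : ℕ) - 1 + 1 = (j : ℕ) * q ^ (t : ℕ) := by omega
    rw [hu]
    exact W_eval_congr A q W
      (by show startOf q ((j : ℕ) * q ^ (t : ℕ) - 1 + 1) = (j : ℕ)
          rw [heq]; exact startOf_mul_pow_eq hq hj.2)
      (by show expOf q ((j : ℕ) * q ^ (t : ℕ) - 1 + 1) = (t : ℕ)
          rw [heq]; exact maxPowDiv_mul_pow hq hj.2)

end LA

section Count

variable {m : ℕ} (A : Matrix (Fin m) (Fin m) ℕ) {q : ℕ} (hq : 2 ≤ q)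

include hq in
lemma card_LA (hbin : ∀ i j, A i j ≤ 1) (n : ℕ) :
    Nat.card {u : Fin n → Fin m // LAProp A q n u}
      = ∏ j ∈ chainStarts q n, entrySum (A ^ (Nat.log q (n / j))) := by
  rw [Nat.card_congr (Equiv.ofBijective _ (LA_bijection A hq n)), Nat.card_pi]
  rw [← Finset.prod_coe_sort (chainStarts q n) (fun j => entrySum (A ^ (Nat.log q (n / j))))]
  apply Finset.prod_congr rfl
  intro j _
  exact card_adm A hbin (Nat.log q (n / (j : ℕ)))

end Count

section Extend

variable {m : ℕ}

/-- extension of a pattern to an infinite admissible sequence -/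
noncomputable def extendFun (σ : Fin m → Fin m) (i₀ : Fin m) (Q N : ℕ)
    (u : Fin N → Fin m) : ℕ → Fin m := fun p =>
  if h : 1 ≤ p ∧ p ≤ N then u ⟨p - 1, by omega⟩
  else if h2 : 2 ≤ Q ∧ Q ∣ p ∧ 2 ≤ p then σ (extendFun σ i₀ Q N u (p / Q))
  else i₀
termination_by p => p
decreasing_by exact Nat.div_lt_self (by omega) (by omega)

lemma extendFun_in (σ : Fin m → Fin m) (i₀ : Fin m) {Q N : ℕ} (u : Fin N → Fin m)
    {p : ℕ} (h1 : 1 ≤ p) (h2 : p ≤ N) :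
    extendFun σ i₀ Q N u p = u ⟨p - 1, by omega⟩ := by
  rw [extendFun]
  rw [dif_pos ⟨h1, h2⟩]

lemma extendFun_out (σ : Fin m → Fin m) (i₀ : Fin m) {Q N : ℕ} (hq : 2 ≤ Q)
    (u : Fin N → Fin m) {p : ℕ} (h1 : 1 ≤ p) (h2 : N < Q * p) :
    extendFun σ i₀ Q N u (Q * p) = σ (extendFun σ i₀ Q N u p) := by
  rw [extendFun]
  rw [dif_neg (by omega), dif_pos ⟨hq, ⟨p, rfl⟩, by nlinarith⟩,
    Nat.mul_div_cancel_left p (by omega)]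

end Extend

section Image

variable {m : ℕ} (A : Matrix (Fin m) (Fin m) ℕ) {q : ℕ} (hq : 2 ≤ q)

lemma exists_succ (hm : 1 ≤ m) (hbin : ∀ i j, A i j ≤ 1)
    (hprim : ∃ n : ℕ, 1 ≤ n ∧ ∀ i j : Fin m, 0 < (A ^ n) i j) :
    ∃ σ : Fin m → Fin m, ∀ i, A i (σ i) = 1 := by
  obtain ⟨nn, hnn, hpos⟩ := hprim
  have key : ∀ i : Fin m, ∃ l : Fin m, A i l = 1 := by
    intro i
    have j0 : Fin m := ⟨0, by omega⟩
    have h := hpos i j0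
    rw [show nn = 1 + (nn - 1) by omega, pow_add, pow_one] at h
    rw [Matrix.mul_apply] at h
    by_contra hc
    push_neg at hc
    have : ∀ l : Fin m, A i l = 0 := by
      intro l
      have := hbin i l
      have := hc l
      omega
    rw [Finset.sum_eq_zero (fun l _ => by rw [this l, zero_mul])] at h
    omega
  exact ⟨fun i => Classical.choose (key i), fun i => Classical.choose_spec (key i)⟩

include hq in
lemma image_LA (hm : 1 ≤ m) (σ : Fin m → Fin m) (hσ : ∀ i, A i (σ i) = 1) (n : ℕ) :
    ((fun (x : ASeq m) (i : Fin n) => x (i : ℕ)) '' multSubshift m A q)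
      = {u | LAProp A q n u} := by
  have i₀ : Fin m := ⟨0, by omega⟩
  apply Set.eq_of_subset_of_subset
  · rintro u ⟨x, hx, rfl⟩
    intro p h1 hp h2
    exact hx p h1
  · intro u hu
    refine ⟨fun k => extendFun σ i₀ q n u (k + 1), ?_, ?_⟩
    · intro i hi
      show A (extendFun σ i₀ q n u (i - 1 + 1)) (extendFun σ i₀ q n u (q * i - 1 + 1)) = 1
      have hqi : 1 ≤ q * i := by nlinarith
      rw [show i - 1 + 1 = i by omega, show q * i - 1 + 1 = q * i by omega]
      by_cases hcase : q * i ≤ n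
      · have hin : i ≤ n := by nlinarith
        rw [extendFun_in σ i₀ u hi hin, extendFun_in σ i₀ u hqi hcase]
        exact hu i hi hin hcase
      · rw [extendFun_out σ i₀ hq u hi (by omega)]
        exact hσ _
    · funext i
      show extendFun σ i₀ q n u ((i : ℕ) + 1) = u i
      rw [extendFun_in σ i₀ u (by omega) (by omega : (i : ℕ) + 1 ≤ n)]
      exact congrArg u (Fin.ext (by simp))

include hq in
lemma patternCount_eq (hm : 1 ≤ m) (hbin : ∀ i j, A i j ≤ 1)
    (hprim : ∃ n : ℕ, 1 ≤ n ∧ ∀ i j : Fin m, 0 < (A ^ n) i j) (n : ℕ) :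
    patternCount m (multSubshift m A q) n
      = ∏ j ∈ chainStarts q n, entrySum (A ^ (Nat.log q (n / j))) := by
  obtain ⟨σ, hσ⟩ := exists_succ A hm hbin hprim
  rw [patternCount, image_LA A hq hm σ hσ n, ← Nat.card_coe_set_eq]
  exact card_LA A hq hbin n

end Image

section Bridge

open Filter Topology

variable {m : ℕ} (A : Matrix (Fin m) (Fin m) ℕ)

lemma entrySum_mul (B : Matrix (Fin m) (Fin m) ℕ) :
    entrySum (B * A) = ∑ i, ∑ l, B i l * rowSum A l := by
  unfold entrySum rowSum
  refine Finset.sum_congr rfl fun i _ => ?_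
  simp only [Matrix.mul_apply]
  rw [Finset.sum_comm]
  exact Finset.sum_congr rfl fun l _ => (Finset.mul_sum _ _ _).symm

lemma entrySum_one (hm : 1 ≤ m) : entrySum (1 : Matrix (Fin m) (Fin m) ℕ) = m := by
  unfold entrySum
  simp [Matrix.one_apply]

lemma entrySum_pow_le (hbin : ∀ i j, A i j ≤ 1) (i : ℕ) :
    entrySum (A ^ (i + 1)) ≤ m * entrySum (A ^ i) := by
  rw [pow_succ, entrySum_mul]
  have hrow : ∀ l, rowSum A l ≤ m := by
    intro l
    unfold rowSum
    calc ∑ j, A l j ≤ ∑ _j : Fin m, 1 := Finset.sum_le_sum fun j _ => hbin l j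
    _ = m := by simp
  calc ∑ a, ∑ l, (A ^ i) a l * rowSum A l
      ≤ ∑ a, ∑ l, (A ^ i) a l * m :=
        Finset.sum_le_sum fun a _ => Finset.sum_le_sum fun l _ =>
          Nat.mul_le_mul_left _ (hrow l)
  _ = m * entrySum (A ^ i) := by
      unfold entrySum
      rw [Finset.mul_sum]
      refine Finset.sum_congr rfl fun a _ => ?_
      rw [Finset.mul_sum]
      exact Finset.sum_congr rfl fun l _ => by ring

lemma entrySum_pow_mono (hrow : ∀ l, 1 ≤ rowSum A l) (i : ℕ) :
    entrySum (A ^ i) ≤ entrySum (A ^ (i + 1)) := by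
  rw [pow_succ, entrySum_mul]
  unfold entrySum
  refine Finset.sum_le_sum fun a _ => Finset.sum_le_sum fun l _ => ?_
  calc (A ^ i) a l = (A ^ i) a l * 1 := (mul_one _).symm
  _ ≤ (A ^ i) a l * rowSum A l := Nat.mul_le_mul_left _ (hrow l)

lemma entrySum_pow_pos (hm : 1 ≤ m) (hrow : ∀ l, 1 ≤ rowSum A l) (i : ℕ) :
    1 ≤ entrySum (A ^ i) := by
  induction i with
  | zero => rw [pow_zero, entrySum_one hm]; omega
  | succ i ih => exact le_trans ih (entrySum_pow_mono A hrow i)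

lemma rowSum_pos (σ : Fin m → Fin m) (hσ : ∀ i, A i (σ i) = 1) (l : Fin m) :
    1 ≤ rowSum A l := by
  unfold rowSum
  calc 1 = A l (σ l) := (hσ l).symm
  _ ≤ ∑ j, A l j := Finset.single_le_sum (fun j _ => Nat.zero_le _) (Finset.mem_univ _)

lemma logb_prod' {α : Type*} (s : Finset α) (f : α → ℝ) (b : ℝ)
    (hf : ∀ x ∈ s, f x ≠ 0) :
    Real.logb b (∏ j ∈ s, f j) = ∑ j ∈ s, Real.logb b (f j) := by
  simp only [Real.logb, Real.log_prod hf, Finset.sum_div]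

variable {q : ℕ} (hq : 2 ≤ q)

include hq in
lemma count_filter (n i : ℕ) :
    ((chainStarts q n).filter (fun j => j * q ^ i ≤ n)).card
      = n / q ^ i - n / q ^ (i + 1) := by
  have hpow : 0 < q ^ i := pow_pos (by omega) _
  set M := n / q ^ i with hM
  have hfe : (chainStarts q n).filter (fun j => j * q ^ i ≤ n)
      = (Finset.Ioc 0 M).filter (fun j => ¬ q ∣ j) := by
    ext j
    simp only [chainStarts, Finset.mem_filter, Finset.mem_Icc, Finset.mem_Ioc]
    have h1 : j * q ^ i ≤ n ↔ j ≤ M := by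
      rw [hM, Nat.le_div_iff_mul_le hpow]
    have h2 : M ≤ n := Nat.div_le_self _ _
    constructor
    · rintro ⟨⟨⟨hj1, hjn⟩, hnd⟩, hle⟩
      exact ⟨⟨by omega, h1.mp hle⟩, hnd⟩
    · rintro ⟨⟨hj0, hjM⟩, hnd⟩
      exact ⟨⟨⟨by omega, by omega⟩, hnd⟩, h1.mpr hjM⟩
  rw [hfe]
  have hsplit := Finset.card_filter_add_card_filter_not
    (s := Finset.Ioc 0 M) (p := fun j => q ∣ j)
  have hdvd : ((Finset.Ioc 0 M).filter (fun j => q ∣ j)).card = M / q :=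
    Nat.Ioc_filter_dvd_card_eq_div M q
  have hcard : (Finset.Ioc 0 M).card = M := by simp
  have hMq : M / q = n / q ^ (i + 1) := by
    rw [hM, Nat.div_div_eq_div_mul, ← pow_succ]
  omega

lemma chainLen_le (n j : ℕ) (hn : 1 ≤ n) (hj : 1 ≤ j) : chainLen q n j ≤ n := by
  have h1 : Nat.log q (n / j) ≤ Nat.log q n := Nat.log_mono_right (Nat.div_le_self _ _)
  have h2 : Nat.log q n < n := Nat.log_lt_self q (by omega)
  rw [chainLen]
  omega

include hq in
lemma sum_rearrange (n : ℕ) (hn : 1 ≤ n) (e c : ℕ → ℝ)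
    (hec : ∀ L, ∑ i ∈ Finset.range (L + 1), c i = e L) :
    ∑ j ∈ chainStarts q n, e (Nat.log q (n / j))
      = ∑ i ∈ Finset.range n, c i * ((n / q ^ i - n / q ^ (i + 1) : ℕ) : ℝ) := by
  have step1 : ∀ j ∈ chainStarts q n,
      e (Nat.log q (n / j)) = ∑ i ∈ Finset.range (chainLen q n j), c i := by
    intro j hj
    rw [chainLen, hec]
  rw [Finset.sum_congr rfl step1]
  have step2 : ∀ j ∈ chainStarts q n,
      ∑ i ∈ Finset.range (chainLen q n j), c i
        = ∑ i ∈ Finset.range n, if i < chainLen q n j then c i else 0 := by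
    intro j hj
    simp only [chainStarts, Finset.mem_filter, Finset.mem_Icc] at hj
    have hle : chainLen q n j ≤ n := chainLen_le n j hn hj.1.1
    have hfeq : Finset.range (chainLen q n j)
        = (Finset.range n).filter (fun i => i < chainLen q n j) := by
      ext i
      simp only [Finset.mem_range, Finset.mem_filter]
      omega
    rw [hfeq, Finset.sum_filter]
  rw [Finset.sum_congr rfl step2, Finset.sum_comm]
  refine Finset.sum_congr rfl fun i hi => ?_
  have hcond : ∀ j ∈ chainStarts q n,
      (i < chainLen q n j) = (j * q ^ i ≤ n) := by
    intro j hj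
    simp only [chainStarts, Finset.mem_filter, Finset.mem_Icc] at hj
    rw [eq_iff_iff, ← chainLen_iff hq hj.1.1 hj.1.2]
  calc ∑ j ∈ chainStarts q n, (if i < chainLen q n j then c i else 0)
      = ∑ j ∈ (chainStarts q n).filter (fun j => i < chainLen q n j), c i :=
        (Finset.sum_filter _ _).symm
  _ = ((chainStarts q n).filter (fun j => i < chainLen q n j)).card • c i :=
        Finset.sum_const _
  _ = ((chainStarts q n).filter (fun j => j * q ^ i ≤ n)).card • c i := by
        congr 2
        apply Finset.filter_congr
        intro j hj
        rw [← eq_iff_iff]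
        exact hcond j hj
  _ = c i * ((n / q ^ i - n / q ^ (i + 1) : ℕ) : ℝ) := by
        rw [count_filter hq n i, nsmul_eq_mul, mul_comm]

end Bridge


lemma div_floor_tendsto (k : ℕ) (hk : 1 ≤ k) :
    Tendsto (fun n : ℕ => ((n / k : ℕ) : ℝ) / n) atTop (𝓝 (1 / k)) := by
  have hlow : Tendsto (fun n : ℕ => 1 / (k : ℝ) - 1 / n) atTop (𝓝 (1 / k)) := by
    simpa using tendsto_const_nhds.sub (tendsto_one_div_atTop_nhds_zero_nat (𝕜 := ℝ))
  apply tendsto_of_tendsto_of_tendsto_of_le_of_le' hlow tendsto_const_nhds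
  · filter_upwards [eventually_ge_atTop 1] with n hn
    have hk' : (0 : ℝ) < k := by exact_mod_cast hk
    have hn' : (0 : ℝ) < n := by exact_mod_cast hn
    have h1 : (n : ℝ) < k * ((n / k : ℕ) + 1) := by
      exact_mod_cast Nat.lt_mul_div_succ n (by omega : 0 < k)
    rw [div_sub_div _ _ (ne_of_gt hk') (ne_of_gt hn'), div_le_div_iff₀ (by positivity) hn']
    nlinarith [Nat.cast_nonneg (α := ℝ) (n / k)]
  · filter_upwards [eventually_ge_atTop 1] with n hn
    have hk' : (0 : ℝ) < k := by exact_mod_cast hk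
    have hn' : (0 : ℝ) < n := by exact_mod_cast hn
    have h1 : ((n / k : ℕ) : ℝ) ≤ (n : ℝ) / k := Nat.cast_div_le
    calc ((n / k : ℕ) : ℝ) / n ≤ ((n : ℝ) / k) / n := by gcongr
    _ = 1 / k := by field_simp
  
lemma main_limit (q : ℕ) (hq : 2 ≤ q) (e : ℕ → ℝ) (he0 : e 0 = 1)
    (c : ℕ → ℝ) (hc : c = fun i => if i = 0 then 1 else e i - e (i - 1))
    (hc0 : ∀ i, 0 ≤ c i) (hc1 : ∀ i, c i ≤ 1) :
    Tendsto (fun n : ℕ =>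
        (∑ i ∈ Finset.range n, c i * ((n / q ^ i - n / q ^ (i + 1) : ℕ) : ℝ)) / n)
      atTop
      (𝓝 (((q : ℝ) - 1) ^ 2 * ∑' i : ℕ, e i / (q : ℝ) ^ (i + 2))) := by
  have hq0 : (0 : ℝ) < q := by positivity
  set r : ℝ := 1 / q with hr
  have hr0 : 0 < r := by positivity
  have hr1 : r < 1 := by
    rw [hr, div_lt_one hq0]
    exact_mod_cast by omega
  -- e in terms of c
  have hec : ∀ L, ∑ i ∈ Finset.range (L + 1), c i = e L := by
    intro L
    induction L with
    | zero => simp [hc, he0]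
    | succ L ih =>
      rw [Finset.sum_range_succ, ih, hc]
      simp
  have he_nonneg : ∀ i, 0 ≤ e i := by
    intro i
    rw [← hec i]
    exact Finset.sum_nonneg fun k _ => hc0 k
  have he_le : ∀ i, e i ≤ i + 1 := by
    intro i
    rw [← hec i]
    calc ∑ k ∈ Finset.range (i + 1), c k ≤ ∑ k ∈ Finset.range (i + 1), 1 :=
      Finset.sum_le_sum fun k _ => hc1 k
    _ = i + 1 := by simp
  set h : ℕ → ℝ := fun i => e i * r ^ i with hh
  have hS : Summable h := by
    have hgsum : Summable (fun i : ℕ => (i : ℝ) * r ^ i + r ^ i) :=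
      Summable.add (by
        simpa using summable_pow_mul_geometric_of_norm_lt_one 1
          (r := r) (by rw [Real.norm_eq_abs, abs_of_pos hr0]; exact hr1))
        (summable_geometric_of_lt_one hr0.le hr1)
    refine Summable.of_nonneg_of_le
      (fun i => mul_nonneg (he_nonneg i) (by positivity)) (fun i => ?_) hgsum
    have h2 : e i * r ^ i ≤ ((i : ℝ) + 1) * r ^ i :=
      mul_le_mul_of_nonneg_right (he_le i) (by positivity)
    simp only [hh]
    linarith
  set S : ℝ := ∑' i, h i with hSdef
  -- the sum as a tsum
  set g : ℕ → ℕ → ℝ := fun n i => c i * ((n / q ^ i - n / q ^ (i + 1) : ℕ) : ℝ) / n with hg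
  have key1 : ∀ n : ℕ,
      (∑ i ∈ Finset.range n, c i * ((n / q ^ i - n / q ^ (i + 1) : ℕ) : ℝ)) / n
        = ∑' i, g n i := by
    intro n
    have hzero : ∀ i ∉ Finset.range n, g n i = 0 := by
      intro i hi
      rw [Finset.mem_range, not_lt] at hi
      have h2 : n < q ^ i := by
        calc n ≤ i := hi
        _ < 2 ^ i := Nat.lt_two_pow_self
        _ ≤ q ^ i := Nat.pow_le_pow_left hq i
      have hz : n / q ^ i = 0 := Nat.div_eq_of_lt h2
      have hz2 : n / q ^ (i + 1) = 0 := Nat.div_eq_of_lt (by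
        calc n < q ^ i := h2
        _ ≤ q ^ (i + 1) := Nat.pow_le_pow_right (by omega) (by omega))
      rw [hg]
      simp [hz, hz2]
    rw [tsum_eq_sum hzero, Finset.sum_div]
  -- dominated convergence
  have key2 : Tendsto (fun n => ∑' i, g n i) atTop
      (𝓝 (∑' i, c i * (r ^ i - r ^ (i + 1)))) := by
    apply tendsto_tsum_of_dominated_convergence
      (bound := fun i => r ^ i) (summable_geometric_of_lt_one hr0.le hr1)
    · intro i
      have hdiv1 := div_floor_tendsto (q ^ i) (Nat.one_le_pow _ _ (by omega))
      have hdiv2 := div_floor_tendsto (q ^ (i + 1)) (Nat.one_le_pow _ _ (by omega))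
      simp only [Nat.cast_pow] at hdiv1 hdiv2
      have hmono : ∀ n : ℕ, n / q ^ (i + 1) ≤ n / q ^ i :=
        fun n => Nat.div_le_div_left (Nat.pow_le_pow_right (by omega) (by omega))
          (pow_pos (by omega) _)
      have : Tendsto (fun n : ℕ => ((n / q ^ i : ℕ) : ℝ) / n - ((n / q ^ (i+1) : ℕ) : ℝ) / n)
          atTop (𝓝 (1 / q ^ i - 1 / q ^ (i + 1))) := hdiv1.sub hdiv2
      have heq : ∀ n : ℕ, g n i
          = c i * (((n / q ^ i : ℕ) : ℝ) / n - ((n / q ^ (i+1) : ℕ) : ℝ) / n) := by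
        intro n
        rw [hg]
        simp only
        rw [Nat.cast_sub (hmono n)]
        ring
      have hre : c i * (1 / (q:ℝ) ^ i - 1 / (q:ℝ) ^ (i + 1)) = c i * (r ^ i - r ^ (i+1)) := by
        rw [hr]
        rw [div_pow, div_pow]
        simp
      rw [← hre]
      simpa [heq] using this.const_mul (c i)
    · filter_upwards [eventually_ge_atTop 1] with n hn i
      have hn' : (0 : ℝ) < n := by exact_mod_cast hn
      have h1 : ((n / q ^ i - n / q ^ (i+1) : ℕ) : ℝ) ≤ (n : ℝ) / q ^ i := by
        calc ((n / q ^ i - n / q ^ (i+1) : ℕ) : ℝ) ≤ ((n / q ^ i : ℕ) : ℝ) := by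
              exact_mod_cast Nat.sub_le _ _
        _ ≤ (n : ℝ) / q ^ i := by
              have := Nat.cast_div_le (α := ℝ) (m := n) (n := q ^ i)
              push_cast at this
              exact this
      have h0 : (0 : ℝ) ≤ ((n / q ^ i - n / q ^ (i+1) : ℕ) : ℝ) := Nat.cast_nonneg _
      rw [hg, Real.norm_eq_abs]
      simp only
      rw [abs_of_nonneg (div_nonneg (mul_nonneg (hc0 i) h0) hn'.le)]
      calc c i * ((n / q ^ i - n / q ^ (i+1) : ℕ) : ℝ) / n
          ≤ 1 * ((n : ℝ) / q ^ i) / n :=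
            div_le_div_of_nonneg_right (mul_le_mul (hc1 i) h1 h0 zero_le_one) hn'.le
      _ = (1 / q : ℝ) ^ i := by
            rw [one_mul, div_pow, one_pow]
            field_simp
      _ = r ^ i := by rw [hr]
  -- limit identity
  have key3 : (∑' i, c i * (r ^ i - r ^ (i + 1)))
      = ((q : ℝ) - 1) ^ 2 * ∑' i : ℕ, e i / (q : ℝ) ^ (i + 2) := by
    set v : ℕ → ℝ := fun i => if i = 0 then 0 else e (i - 1) * r ^ i with hv
    have hv_succ : ∀ i : ℕ, v (i + 1) = r * h i := by
      intro i
      rw [hv, hh]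
      simp only [Nat.add_sub_cancel, if_neg (Nat.succ_ne_zero i)]
      ring
    have hvsum : Summable v := by
      rw [← summable_nat_add_iff 1]
      simp only [hv_succ]
      exact hS.mul_left r
    have hu : ∀ i, c i * r ^ i = h i - v i := by
      intro i
      match i with
      | 0 => simp [hc, hv, hh, he0]
      | Nat.succ i =>
        simp only [hc, hv, hh]
        rw [if_neg (Nat.succ_ne_zero i), if_neg (Nat.succ_ne_zero i)]
        simp only [Nat.succ_sub_one]
        ring
    have husum : Summable (fun i => c i * r ^ i) := by
      simp only [hu]; exact hS.sub hvsum
    have hvtsum : ∑' i, v i = r * S := by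
      rw [hvsum.tsum_eq_zero_add]
      simp only [hv_succ]
      rw [tsum_mul_left]
      simp [hv, hSdef]
    have hutsum : ∑' i, c i * r ^ i = S - r * S := by
      simp only [hu]
      rw [hS.tsum_sub hvsum, hvtsum, hSdef]
    have hpt : ∀ i, c i * (r ^ i - r ^ (i + 1)) = (1 - r) * (c i * r ^ i) := by
      intro i; ring
    have lhs_eq : (∑' i, c i * (r ^ i - r ^ (i + 1))) = (1 - r) * (S - r * S) := by
      simp only [hpt]
      rw [tsum_mul_left, hutsum]
    have hqne : (q : ℝ) ≠ 0 := ne_of_gt hq0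
    have rhs_pt : ∀ i : ℕ, e i / (q : ℝ) ^ (i + 2) = r ^ 2 * h i := by
      intro i
      rw [hh, hr]
      simp only
      rw [div_pow, one_pow, pow_add]
      rw [div_mul_eq_mul_div, one_mul, div_pow, one_pow]
      rw [mul_one_div, div_div]
    have rhs_eq : (∑' i : ℕ, e i / (q : ℝ) ^ (i + 2)) = r ^ 2 * S := by
      simp only [rhs_pt]
      rw [tsum_mul_left, hSdef]
    rw [lhs_eq, rhs_eq]
    have hx : ((q:ℝ) - 1) * r = 1 - r := by
      rw [hr]; field_simp
    have h2 : ((q:ℝ) - 1) ^ 2 * r ^ 2 = (1 - r) ^ 2 := by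
      rw [← mul_pow, hx]
    calc (1 - r) * (S - r * S) = (1 - r) ^ 2 * S := by ring
    _ = ((q:ℝ) - 1) ^ 2 * (r ^ 2 * S) := by rw [← h2]; ring
  rw [← key3]
  exact (Filter.tendsto_congr key1).mpr key2


/-- Kenyon–Peres–Solomyak, Theorem 1.1(1): the Minkowski dimension of `X_A^{(q)}` exists
and equals `(q−1)² Σ_{i=1}^∞ log_m |A^{i−1}| / q^{i+1}`. -/
theorem minkowski_mult_sft
    (m : ℕ) (hm : 2 ≤ m) (q : ℕ) (hq : 2 ≤ q)
    (A : Matrix (Fin m) (Fin m) ℕ)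
    (hbin : ∀ i j, A i j ≤ 1)
    (hprim : ∃ n : ℕ, 1 ≤ n ∧ ∀ i j : Fin m, 0 < (A ^ n) i j) :
    Filter.Tendsto
      (fun n : ℕ => Real.logb m (patternCount m (multSubshift m A q) n) / n)
      Filter.atTop
      (𝓝 (((q : ℝ) - 1) ^ 2 *
        ∑' i : ℕ, Real.logb m (entrySum (A ^ i)) / (q : ℝ) ^ (i + 2))) := by
  have hm1 : (1:ℝ) < (m:ℝ) := by exact_mod_cast hm
  obtain ⟨σ, hσ⟩ := exists_succ A (by omega) hbin hprim
  have hrow : ∀ l, 1 ≤ rowSum A l := rowSum_pos A σ hσ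
  have hE1 : ∀ i, 1 ≤ entrySum (A ^ i) := entrySum_pow_pos A (by omega) hrow
  set e : ℕ → ℝ := fun i => Real.logb m (entrySum (A ^ i)) with he
  set c : ℕ → ℝ := fun i => if i = 0 then 1 else e i - e (i - 1) with hc
  have hEpos : ∀ i, (0:ℝ) < (entrySum (A ^ i) : ℝ) := by
    intro i; exact_mod_cast hE1 i
  have he0 : e 0 = 1 := by
    rw [he]
    simp only [pow_zero, entrySum_one (show 1 ≤ m by omega)]
    exact Real.logb_self_eq_one (b := (m:ℝ)) (by exact_mod_cast hm)
  have hc0 : ∀ i, 0 ≤ c i := by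
    intro i
    rw [hc]
    match i with
    | 0 => norm_num
    | Nat.succ s =>
      simp only [Nat.succ_ne_zero, if_false, Nat.succ_sub_one]
      have hmono : (entrySum (A ^ s) : ℝ) ≤ (entrySum (A ^ (s+1)) : ℝ) := by
        exact_mod_cast entrySum_pow_mono A hrow s
      have := Real.logb_le_logb_of_le hm1 (hEpos s) hmono
      rw [he]
      simp only
      linarith
  have hc1 : ∀ i, c i ≤ 1 := by
    intro i
    rw [hc]
    match i with
    | 0 => norm_num
    | Nat.succ s =>
      simp only [Nat.succ_ne_zero, if_false, Nat.succ_sub_one]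
      have hle : (entrySum (A ^ (s+1)) : ℝ) ≤ (m : ℝ) * (entrySum (A ^ s) : ℝ) := by
        exact_mod_cast entrySum_pow_le A hbin s
      have h1 := Real.logb_le_logb_of_le hm1 (hEpos (s+1)) hle
      rw [Real.logb_mul (by positivity) (ne_of_gt (hEpos s))] at h1
      rw [Real.logb_self_eq_one (b := (m:ℝ)) (by exact_mod_cast hm)] at h1
      rw [he]
      simp only
      linarith
  have hec : ∀ L, ∑ i ∈ Finset.range (L + 1), c i = e L := by
    intro L
    induction L with
    | zero => simp [hc, he0]
    | succ L ih =>
      rw [Finset.sum_range_succ, ih, hc]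
      simp
  have hmain := main_limit q hq e he0 c hc hc0 hc1
  apply Filter.Tendsto.congr' _ hmain
  filter_upwards [Filter.eventually_ge_atTop 1] with n hn
  have hpc := patternCount_eq A hq (show 1 ≤ m by omega) hbin hprim n
  rw [hpc]
  have hprod : ((∏ j ∈ chainStarts q n, entrySum (A ^ (Nat.log q (n / j))) : ℕ) : ℝ)
      = ∏ j ∈ chainStarts q n, ((entrySum (A ^ (Nat.log q (n / j))) : ℕ) : ℝ) := by
    push_cast
    rfl
  rw [hprod, logb_prod' _ _ _ (fun j _ => ne_of_gt (hEpos _))]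
  rw [show (∑ j ∈ chainStarts q n, Real.logb m (entrySum (A ^ (Nat.log q (n / j)))))
      = ∑ j ∈ chainStarts q n, e (Nat.log q (n / j)) from rfl]
  rw [sum_rearrange hq n hn e c hec]
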